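/- For real $a$ and $\beta, m, \omega > 0$, the functions $p(t) = \frac{1}{\sqrt{\beta}}\arctan\left(\frac{\eta}{\sqrt{1+(1+\eta^2)\cot^2(\sqrt{1+\eta^2}\,\omega t)}}\right)$ and $x(t) = -\frac{a\sqrt{1+\eta^2}\cot(\sqrt{1+\eta^2}\,\omega t)}{\sqrt{1+(1+\eta^2)\cot^2(\sqrt{1+\eta^2}\,\omega t)}}$, with $\eta = \sqrt{\beta} m \omega a$, satisfy the Hamilton equations $\dot x = \tan(\sqrt{\beta} p)\sec^2(\sqrt{\beta} p)/(\sqrt{\beta} m)$ and $\dot p = -m\omega^2 x$ on any interval where $\sin(\sqrt{1+\eta^2}\,\omega t) \ne 0$. -/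

import Mathlib

noncomputable def gupCot (u : ℝ) : ℝ := Real.cos u / Real.sin u

theorem gup_oscillator_hamilton_equations (β m ω a : ℝ) (hβ : 0 < β)
    (hm : 0 < m) (hω : 0 < ω) :
    let η := Real.sqrt β * m * ω * a
    let p : ℝ → ℝ := fun t =>
      (1 / Real.sqrt β) * Real.arctan (η /
        Real.sqrt (1 + (1 + η ^ 2) * gupCot (Real.sqrt (1 + η ^ 2) * ω * t) ^ 2))
    let x : ℝ → ℝ := fun t =>
      -(a * Real.sqrt (1 + η ^ 2) * gupCot (Real.sqrt (1 + η ^ 2) * ω * t)) /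
        Real.sqrt (1 + (1 + η ^ 2) * gupCot (Real.sqrt (1 + η ^ 2) * ω * t) ^ 2)
    ∀ t : ℝ, Real.sin (Real.sqrt (1 + η ^ 2) * ω * t) ≠ 0 →
      HasDerivAt x (Real.tan (Real.sqrt β * p t) *
        (1 / Real.cos (Real.sqrt β * p t)) ^ 2 / (Real.sqrt β * m)) t ∧
      HasDerivAt p (-(m * ω ^ 2 * x t)) t := by
  intro η p x t hsin
  have hβs : (0:ℝ) < Real.sqrt β := Real.sqrt_pos.mpr hβ
  have hη : η = Real.sqrt β * m * ω * a := rfl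
  have hKpos : (0:ℝ) < 1 + η ^ 2 := by positivity
  have hK2 : Real.sqrt (1 + η ^ 2) ^ 2 = 1 + η ^ 2 := Real.sq_sqrt hKpos.le
  set sq := Real.sqrt (1 + η ^ 2) with hsq
  set u := sq * ω * t with hu
  set s := Real.sin u with hs_def
  set co := Real.cos u with hco_def
  have hsc : s ^ 2 + co ^ 2 = 1 := Real.sin_sq_add_cos_sq u
  set c := gupCot u with hc
  have hcval : c = co / s := rfl
  have hcs : s ^ 2 * (1 + c ^ 2) = 1 := by
    rw [hcval]; field_simp; linarith [hsc]
  set d := Real.sqrt (1 + (1 + η ^ 2) * c ^ 2) with hd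
  have hgpos : (0:ℝ) < 1 + (1 + η ^ 2) * c ^ 2 := by positivity
  have hd2 : d ^ 2 = 1 + (1 + η ^ 2) * c ^ 2 := Real.sq_sqrt hgpos.le
  have hdpos : (0:ℝ) < d := Real.sqrt_pos.mpr hgpos
  -- derivative of the linear inner function
  have hlin : HasDerivAt (fun τ : ℝ => sq * ω * τ) (sq * ω) t := by
    simpa using (hasDerivAt_id t).const_mul (sq * ω)
  have hcosd : HasDerivAt (fun τ : ℝ => Real.cos (sq * ω * τ)) (-s * (sq * ω)) t :=
    (Real.hasDerivAt_cos u).comp t hlin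
  have hsind : HasDerivAt (fun τ : ℝ => Real.sin (sq * ω * τ)) (co * (sq * ω)) t :=
    (Real.hasDerivAt_sin u).comp t hlin
  have hcotd : HasDerivAt (fun τ : ℝ => gupCot (sq * ω * τ)) (-(sq * ω) / s ^ 2) t := by
    have h := hcosd.div hsind hsin
    convert h using 1
    · rfl
    · rfl
    · rfl
    rw [← hu, ← hs_def, ← hco_def]
    field_simp
    linear_combination sq * hsc
  have hb2 : Real.sqrt β ^ 2 = β := Real.sq_sqrt hβ.le
  have hm' : m ≠ 0 := hm.ne'
  have hω' : ω ≠ 0 := hω.ne'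
  have hgd : HasDerivAt (fun τ : ℝ => 1 + (1 + η ^ 2) * gupCot (sq * ω * τ) ^ 2)
      ((1 + η ^ 2) * ((2:ℕ) * c ^ 1 * (-(sq * ω) / s ^ 2))) t :=
    ((hcotd.pow 2).const_mul (1 + η ^ 2)).const_add 1
  have hDd : HasDerivAt (fun τ : ℝ => Real.sqrt (1 + (1 + η ^ 2) * gupCot (sq * ω * τ) ^ 2))
      ((1 + η ^ 2) * ((2:ℕ) * c ^ 1 * (-(sq * ω) / s ^ 2)) / (2 * d)) t :=
    hgd.sqrt hgpos.ne'
  have hnum : HasDerivAt (fun τ : ℝ => -(a * sq * gupCot (sq * ω * τ)))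
      (-(a * sq * (-(sq * ω) / s ^ 2))) t := (hcotd.const_mul (a * sq)).neg
  have hx_raw : HasDerivAt x
      ((-(a * sq * (-(sq * ω) / s ^ 2)) * d - -(a * sq * c) *
        ((1 + η ^ 2) * ((2:ℕ) * c ^ 1 * (-(sq * ω) / s ^ 2)) / (2 * d))) / d ^ 2) t :=
    hnum.div hDd hdpos.ne'
  have hconst : HasDerivAt (fun _ : ℝ => η) (0:ℝ) t := hasDerivAt_const t η
  have hfrac : HasDerivAt (fun τ : ℝ => η / Real.sqrt (1 + (1 + η ^ 2) * gupCot (sq * ω * τ) ^ 2))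
      ((0 * d - η * ((1 + η ^ 2) * ((2:ℕ) * c ^ 1 * (-(sq * ω) / s ^ 2)) / (2 * d))) / d ^ 2) t :=
    hconst.div hDd hdpos.ne'
  have hp_raw : HasDerivAt p
      (1 / Real.sqrt β * (1 / (1 + (η / d) ^ 2) *
        ((0 * d - η * ((1 + η ^ 2) * ((2:ℕ) * c ^ 1 * (-(sq * ω) / s ^ 2)) / (2 * d))) / d ^ 2))) t :=
    (hfrac.arctan).const_mul (1 / Real.sqrt β)
  have hpt : Real.sqrt β * p t = Real.arctan (η / d) := by
    have h1 : p t = 1 / Real.sqrt β * Real.arctan (η / d) := rfl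
    rw [h1]; field_simp
  have hxt : x t = -(a * sq * c) / d := rfl
  have hd2' : d ^ 2 = 1 + (1 + (Real.sqrt β*m*ω*a) ^ 2) * c ^ 2 := by rw [← hη]; exact hd2
  have hK2' : sq ^ 2 = 1 + (Real.sqrt β*m*ω*a) ^ 2 := by rw [← hη]; exact hK2
  constructor
  · convert hx_raw using 1
    rw [hpt, Real.tan_arctan, Real.cos_arctan, one_div_one_div,
      Real.sq_sqrt (by positivity : (0:ℝ) ≤ 1 + (η / d) ^ 2), hη]
    field_simp
    linear_combination (2*a*s^2 - 2*a*sq^2) * hd2' + 2*a*(1+(Real.sqrt β*m*ω*a)^2) * hcs - 2*a * hK2'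
  · convert hp_raw using 1
    rw [hxt, hη]
    field_simp
    linear_combination (2*m*ω^2*a*sq*c*Real.sqrt β)*s^2 * hd2' + (2*m*ω^2*a*sq*c*Real.sqrt β)*(1+(Real.sqrt β*m*ω*a)^2) * hcs
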